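/- Let n ≥ 2. Let 𝒢 : ({0,1}^n → ℝ) → ℝ^n be the map A ↦ (d₁(A),…,d_n(A)) sending a real binary tensor to its tuple of Gram determinants, and let 𝐵 = {A : Σ_v A(v)² ≤ 1} be the unit ball of tensors. Then the convex hull of the Gram locus 𝒢(𝐵) equals the polytope {(d₁,…,d_n) ∈ ℝ^n : 0 ≤ d_i ≤ 1/4 for all i, and d_i ≤ Σ_{j≠i} d_j for all i}. -/

import Mathlib

/-- The multi-index in `{0,1}^n` whose `k`-th coordinate is `b` and whose remaining
coordinates are given by `r`. -/
def iotaIdx (n : ℕ) (k : Fin n) (b : Bool) (r : {j : Fin n // j ≠ k} → Bool) : Fin n → Bool :=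
  fun j => if h : j = k then b else r ⟨j, h⟩

/-- The `k`-th Gram determinant of a real binary tensor `A` of format `2 × ⋯ × 2`. -/
noncomputable def gramDet (n : ℕ) (A : (Fin n → Bool) → ℝ) (k : Fin n) : ℝ :=
  (∑ r : {j : Fin n // j ≠ k} → Bool, (A (iotaIdx n k false r)) ^ 2) *
    (∑ r : {j : Fin n // j ≠ k} → Bool, (A (iotaIdx n k true r)) ^ 2) -
  (∑ r : {j : Fin n // j ≠ k} → Bool, A (iotaIdx n k false r) * A (iotaIdx n k true r)) ^ 2

namespace GramProof
open Finset

variable {n : ℕ}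

def pxor (v w : Fin n → Bool) : Fin n → Bool := fun j => xor (v j) (w j)

def unitv (k : Fin n) : Fin n → Bool := fun j => decide (j = k)

lemma pxor_assoc (v a b : Fin n → Bool) : pxor (pxor v a) b = pxor v (pxor a b) := by
  funext j; simp [pxor, Bool.xor_assoc]

lemma pxor_cancel (v a : Fin n → Bool) : pxor (pxor v a) a = v := by
  funext j; simp [pxor]

lemma pxor_right_comm (v a b : Fin n → Bool) : pxor (pxor v a) b = pxor (pxor v b) a := by
  funext j; simp [pxor, Bool.xor_assoc, Bool.xor_comm (a j) (b j)]

lemma pxor_vwv (v w : Fin n → Bool) : pxor v (pxor w v) = w := by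
  funext j; unfold pxor; cases v j <;> cases w j <;> rfl

lemma pxor_uwv (v w u : Fin n → Bool) : pxor (pxor v u) (pxor w v) = pxor w u := by
  funext j; unfold pxor; cases v j <;> cases w j <;> cases u j <;> rfl

lemma sum_pxor (a : Fin n → Bool) (f : (Fin n → Bool) → ℝ) :
    ∑ v, f (pxor v a) = ∑ v, f v := by
  apply Fintype.sum_bijective (fun v => pxor v a)
    (Function.Involutive.bijective (fun v => pxor_cancel v a)) _ _ (fun v => rfl)

/-- energy of `ψ` in direction `k` -/
noncomputable def Egy (k : Fin n) (ψ : (Fin n → Bool) → ℝ) : ℝ :=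
  ∑ v, (ψ v - ψ (pxor v (unitv k))) ^ 2

lemma Egy_nonneg (k : Fin n) (ψ) : 0 ≤ Egy k ψ :=
  Finset.sum_nonneg fun _ _ => sq_nonneg _

lemma core : ∀ (m : ℕ) (g : Fin n → Bool) (i : Fin n),
    (univ.filter fun k => g k = true).card ≤ m → g i = true →
    ∀ ψ : (Fin n → Bool) → ℝ, (∀ v, ψ (pxor v g) = ψ v) →
    Egy i ψ ≤ ∑ k ∈ (univ.erase i).filter (fun k => g k = true), Egy k ψ := by
  intro m
  induction m with
  | zero =>
    intro g i hcard hgi ψ _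
    exfalso
    have : i ∈ univ.filter fun k => g k = true := by simp [hgi]
    have := Finset.card_pos.2 ⟨i, this⟩
    omega
  | succ m IH =>
    intro g i hcard hgi ψ hper
    by_cases hk : ∃ k₀, k₀ ≠ i ∧ g k₀ = true
    · obtain ⟨k₀, hki, hgk⟩ := hk
      set u₀ : Fin n → Bool := unitv k₀ with hu₀
      set α : (Fin n → Bool) → ℝ := fun v => (ψ v + ψ (pxor v u₀)) / 2 with hα
      set β : (Fin n → Bool) → ℝ := fun v => (ψ v - ψ (pxor v u₀)) / 2 with hβ
      have hαflip : ∀ v, α (pxor v u₀) = α v := by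
        intro v; simp only [hα, pxor_cancel]; ring
      have hβflip : ∀ v, β (pxor v u₀) = - β v := by
        intro v; simp only [hβ, pxor_cancel]; ring
      have hsum : ∀ v, ψ v = α v + β v := by intro v; simp only [hα, hβ]; ring
      have hsplit : ∀ k, Egy k ψ = Egy k α + Egy k β := by
        intro k
        have cross : ∑ v, (α v - α (pxor v (unitv k))) * (β v - β (pxor v (unitv k))) = 0 := by
          by_cases hkk : k = k₀
          · subst hkk
            have : ∀ v, (α v - α (pxor v (unitv k))) * (β v - β (pxor v (unitv k))) = 0 := by
              intro v; rw [← hu₀, hαflip]; ring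
            simp [this]
          · set t : (Fin n → Bool) → ℝ :=
              fun v => (α v - α (pxor v (unitv k))) * (β v - β (pxor v (unitv k))) with ht
            have hanti : ∀ v, t (pxor v u₀) = - t v := by
              intro v
              simp only [ht]
              rw [pxor_right_comm v u₀ (unitv k), hαflip, hαflip, hβflip, hβflip]
              ring
            have h1 : ∑ v, t v = ∑ v, t (pxor v u₀) := (sum_pxor u₀ t).symm
            have h2 : ∑ v, t (pxor v u₀) = - ∑ v, t v := by
              simp only [hanti]; rw [Finset.sum_neg_distrib]
            linarith [h1, h2]
        have expand : ∀ v, (ψ v - ψ (pxor v (unitv k))) ^ 2 =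
            (α v - α (pxor v (unitv k))) ^ 2 + (β v - β (pxor v (unitv k))) ^ 2 +
              2 * ((α v - α (pxor v (unitv k))) * (β v - β (pxor v (unitv k)))) := by
          intro v; rw [hsum v, hsum (pxor v (unitv k))]; ring
        simp only [Egy, expand, Finset.sum_add_distrib, ← Finset.mul_sum, cross]
        ring
      set g' : Fin n → Bool := pxor g u₀ with hg'
      have hαper : ∀ v, α (pxor v g') = α v := by
        intro v
        have e1 : pxor v g' = pxor (pxor v u₀) g := by
          rw [hg', ← pxor_assoc, pxor_right_comm]
        have e2 : pxor (pxor v g') u₀ = pxor v g := by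
          rw [hg', pxor_assoc, pxor_assoc]; congr 1
          funext j; simp [pxor, Bool.xor_comm]
        have a1 : α (pxor v g') = (ψ (pxor v g') + ψ (pxor (pxor v g') u₀)) / 2 := rfl
        have a2 : α v = (ψ v + ψ (pxor v u₀)) / 2 := rfl
        rw [a1, a2, e2, e1, hper, hper]
        ring
      have hfilter : (univ.filter fun k => g' k = true) =
          (univ.filter fun k => g k = true).erase k₀ := by
        ext k
        simp only [mem_filter, mem_univ, true_and, mem_erase, hg', hu₀, pxor, unitv]
        by_cases h : k = k₀ <;> simp [h, hgk]
      have hcard' : (univ.filter fun k => g' k = true).card ≤ m := by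
        rw [hfilter, Finset.card_erase_of_mem (by simp [hgk])]
        omega
      have hik : ¬ i = k₀ := fun h => hki h.symm
      have hgi' : g' i = true := by
        simp [hg', hu₀, pxor, unitv, hgi, hik]
      have hA := IH g' i hcard' hgi' α hαper
      have hAmono : ∑ k ∈ (univ.erase i).filter (fun k => g' k = true), Egy k α ≤
          ∑ k ∈ (univ.erase i).filter (fun k => g k = true), Egy k α := by
        apply Finset.sum_le_sum_of_subset_of_nonneg
        · intro k hk
          simp only [mem_filter, mem_erase] at hk ⊢
          refine ⟨hk.1, ?_⟩
          have := hk.2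
          simp only [hg', hu₀, pxor, unitv] at this
          by_cases h : k = k₀
          · subst h; simp [hgk] at this
          · simpa [h] using this
        · intro k _ _; exact Egy_nonneg k α
      have hB : Egy i β ≤ Egy k₀ β := by
        have e1 : Egy k₀ β = ∑ v, 4 * (β v) ^ 2 := by
          unfold Egy
          apply Finset.sum_congr rfl
          intro v _
          rw [← hu₀, hβflip]; ring
        have e2 : Egy i β ≤ ∑ v, (2 * (β v) ^ 2 + 2 * (β (pxor v (unitv i))) ^ 2) := by
          unfold Egy
          apply Finset.sum_le_sum
          intro v _
          nlinarith [sq_nonneg (β v + β (pxor v (unitv i)))]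
        have e3 : ∑ v, (2 * (β v) ^ 2 + 2 * (β (pxor v (unitv i))) ^ 2) =
            ∑ v, 4 * (β v) ^ 2 := by
          rw [Finset.sum_add_distrib]
          rw [show ∑ v, 2 * (β (pxor v (unitv i))) ^ 2 = ∑ v, 2 * (β v) ^ 2 from
            sum_pxor (unitv i) (fun v => 2 * (β v) ^ 2)]
          rw [← Finset.sum_add_distrib]
          apply Finset.sum_congr rfl; intros; ring
        rw [e1]; rw [e3] at e2; exact e2
      have hk₀mem : k₀ ∈ (univ.erase i).filter (fun k => g k = true) := by
        simp [hki, hgk]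
      have hBsum : Egy k₀ β ≤ ∑ k ∈ (univ.erase i).filter (fun k => g k = true), Egy k β :=
        Finset.single_le_sum (fun k _ => Egy_nonneg k β) hk₀mem
      calc Egy i ψ = Egy i α + Egy i β := hsplit i
        _ ≤ (∑ k ∈ (univ.erase i).filter (fun k => g k = true), Egy k α) +
            (∑ k ∈ (univ.erase i).filter (fun k => g k = true), Egy k β) := by
            have := le_trans hA hAmono
            linarith [le_trans hB hBsum]
        _ = ∑ k ∈ (univ.erase i).filter (fun k => g k = true), Egy k ψ := by
            rw [← Finset.sum_add_distrib]
            exact Finset.sum_congr rfl fun k _ => (hsplit k).symm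
    · push_neg at hk
      have hg : g = unitv i := by
        funext j
        by_cases h : j = i
        · subst h; simp [unitv, hgi]
        · simp only [unitv, h, decide_eq_false_iff_not]
          exact Bool.not_eq_true _ ▸ (by simpa using hk j h)
      have : Egy i ψ = 0 := by
        unfold Egy
        apply Finset.sum_eq_zero
        intro v _
        rw [← hg, hper]; ring
      rw [this]
      exact Finset.sum_nonneg fun k _ => Egy_nonneg k ψ

def sliceEquiv (k : Fin n) : (Fin n → Bool) ≃ Bool × ({j : Fin n // j ≠ k} → Bool) where
  toFun v := (v k, fun j => v j.1)
  invFun p := iotaIdx n k p.1 p.2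
  left_inv v := by
    funext j
    unfold iotaIdx
    by_cases h : j = k
    · subst h; simp
    · simp [h]
  right_inv p := by
    obtain ⟨b, r⟩ := p
    unfold iotaIdx
    refine Prod.ext ?_ ?_
    · simp
    · funext j
      simp [j.2]

lemma sum_split (k : Fin n) (F : (Fin n → Bool) → ℝ) :
    ∑ v, F v = (∑ r, F (iotaIdx n k false r)) + ∑ r, F (iotaIdx n k true r) := by
  rw [← Equiv.sum_comp (sliceEquiv k).symm F]
  rw [Fintype.sum_prod_type]
  rw [Fintype.sum_bool]
  exact add_comm _ _

lemma iota_flip (k : Fin n) (b : Bool) (r : {j : Fin n // j ≠ k} → Bool) :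
    pxor (iotaIdx n k b r) (unitv k) = iotaIdx n k (!b) r := by
  funext j
  by_cases h : j = k
  · subst h; simp [pxor, unitv, iotaIdx, Bool.xor_true]
  · simp [pxor, unitv, iotaIdx, h]

lemma lagrange {k : Fin n} (u w : ({j : Fin n // j ≠ k} → Bool) → ℝ) :
    ∑ r, ∑ r', (u r * w r' - u r' * w r) ^ 2 =
      2 * ((∑ r, u r ^ 2) * (∑ r, w r ^ 2) - (∑ r, u r * w r) ^ 2) := by
  have expand : ∀ r r', (u r * w r' - u r' * w r) ^ 2 =
      u r ^ 2 * w r' ^ 2 + u r' ^ 2 * w r ^ 2 - 2 * ((u r * w r) * (u r' * w r')) := by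
    intro r r'; ring
  simp only [expand, Finset.sum_add_distrib, Finset.sum_sub_distrib, ← Finset.mul_sum,
    ← Finset.sum_mul]
  ring

lemma iota_k (k : Fin n) (b : Bool) (r : {j : Fin n // j ≠ k} → Bool) :
    iotaIdx n k b r k = b := by simp [iotaIdx]

lemma gram_eq (A : (Fin n → Bool) → ℝ) (k : Fin n) :
    ∑ g, (if g k = true then Egy k (fun v => A v * A (pxor v g)) else 0) =
      4 * gramDet n A k := by
  unfold gramDet
  set T : (Fin n → Bool) → (Fin n → Bool) → ℝ := fun v w =>
    if xor (v k) (w k) = true then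
      (A v * A w - A (pxor v (unitv k)) * A (pxor w (unitv k))) ^ 2
    else 0 with hT
  have step1 : ∑ g, (if g k = true then Egy k (fun v => A v * A (pxor v g)) else 0) =
      ∑ v, ∑ w, T v w := by
    have e1 : ∀ g : Fin n → Bool, (if g k = true then Egy k (fun v => A v * A (pxor v g)) else 0)
        = ∑ v, (if g k = true then
            (A v * A (pxor v g) - A (pxor v (unitv k)) * A (pxor (pxor v (unitv k)) g)) ^ 2
          else 0) := by
      intro g
      by_cases h : g k = true <;> simp [h, Egy]
    rw [Finset.sum_congr rfl fun g _ => e1 g, Finset.sum_comm]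
    apply Finset.sum_congr rfl
    intro v _
    rw [show (∑ g, (if g k = true then
            (A v * A (pxor v g) - A (pxor v (unitv k)) * A (pxor (pxor v (unitv k)) g)) ^ 2
          else 0)) = ∑ w, (if (pxor w v) k = true then
            (A v * A (pxor v (pxor w v)) -
              A (pxor v (unitv k)) * A (pxor (pxor v (unitv k)) (pxor w v))) ^ 2
          else 0) from (sum_pxor v _).symm]
    apply Finset.sum_congr rfl
    intro w _
    rw [pxor_vwv, pxor_uwv]
    have : (pxor w v) k = xor (v k) (w k) := by
      unfold pxor; cases v k <;> cases w k <;> rfl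
    rw [this, hT]
  rw [step1]
  rw [sum_split k (fun v => ∑ w, T v w)]
  rw [Finset.sum_congr rfl (fun r (_ : r ∈ univ) => sum_split k (fun w => T (iotaIdx n k false r) w)),
      Finset.sum_congr rfl (fun r (_ : r ∈ univ) => sum_split k (fun w => T (iotaIdx n k true r) w))]
  have Tff : ∀ r r', T (iotaIdx n k false r) (iotaIdx n k false r') = 0 := by
    intro r r'; simp [hT, iota_k]
  have Ttt : ∀ r r', T (iotaIdx n k true r) (iotaIdx n k true r') = 0 := by
    intro r r'; simp [hT, iota_k]
  have Tft : ∀ r r', T (iotaIdx n k false r) (iotaIdx n k true r') =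
      (A (iotaIdx n k false r) * A (iotaIdx n k true r') -
        A (iotaIdx n k true r) * A (iotaIdx n k false r')) ^ 2 := by
    intro r r'
    simp only [hT, iota_k, iota_flip]
    norm_num
  have Ttf : ∀ r r', T (iotaIdx n k true r) (iotaIdx n k false r') =
      (A (iotaIdx n k false r) * A (iotaIdx n k true r') -
        A (iotaIdx n k true r) * A (iotaIdx n k false r')) ^ 2 := by
    intro r r'
    simp only [hT, iota_k, iota_flip]
    norm_num
    ring
  simp only [Tff, Ttt, Tft, Ttf, Finset.sum_const_zero, add_zero, zero_add]
  set u : ({j : Fin n // j ≠ k} → Bool) → ℝ := fun r => A (iotaIdx n k false r) with hu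
  set w : ({j : Fin n // j ≠ k} → Bool) → ℝ := fun r => A (iotaIdx n k true r) with hw
  have key : ∑ r, ∑ r', (u r * w r' - w r * u r') ^ 2 =
      2 * ((∑ r, u r ^ 2) * (∑ r, w r ^ 2) - (∑ r, u r * w r) ^ 2) := by
    rw [← lagrange u w]
    apply Finset.sum_congr rfl; intro r _
    apply Finset.sum_congr rfl; intro r' _
    ring
  linarith [key]

lemma polygon (A : (Fin n → Bool) → ℝ) (i : Fin n) :
    gramDet n A i ≤ ∑ j ∈ univ.erase i, gramDet n A j := by
  have hper : ∀ g : Fin n → Bool, ∀ v,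
      (fun v => A v * A (pxor v g)) (pxor v g) = (fun v => A v * A (pxor v g)) v := by
    intro g v
    simp only [pxor_cancel]
    ring
  have key : ∀ g : Fin n → Bool,
      (if g i = true then Egy i (fun v => A v * A (pxor v g)) else 0) ≤
      ∑ k ∈ univ.erase i, (if g k = true then Egy k (fun v => A v * A (pxor v g)) else 0) := by
    intro g
    by_cases h : g i = true
    · rw [if_pos h, ← Finset.sum_filter]
      exact core _ g i le_rfl h _ (hper g)
    · rw [if_neg h]
      apply Finset.sum_nonneg
      intro k _
      split
      · exact Egy_nonneg _ _
      · exact le_rfl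
  have h1 : 4 * gramDet n A i ≤ ∑ k ∈ univ.erase i, 4 * gramDet n A k := by
    rw [← gram_eq A i]
    calc ∑ g, (if g i = true then Egy i (fun v => A v * A (pxor v g)) else 0)
        ≤ ∑ g, ∑ k ∈ univ.erase i,
            (if g k = true then Egy k (fun v => A v * A (pxor v g)) else 0) :=
          Finset.sum_le_sum fun g _ => key g
      _ = ∑ k ∈ univ.erase i, ∑ g,
            (if g k = true then Egy k (fun v => A v * A (pxor v g)) else 0) := Finset.sum_comm
      _ = ∑ k ∈ univ.erase i, 4 * gramDet n A k :=
          Finset.sum_congr rfl fun k _ => gram_eq A k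
  rw [← Finset.mul_sum] at h1
  linarith

lemma gram_nonneg (A : (Fin n → Bool) → ℝ) (k : Fin n) : 0 ≤ gramDet n A k := by
  unfold gramDet
  have := Finset.sum_mul_sq_le_sq_mul_sq univ
    (fun r => A (iotaIdx n k false r)) (fun r => A (iotaIdx n k true r))
  linarith

lemma gram_le_quarter (A : (Fin n → Bool) → ℝ) (k : Fin n)
    (h : ∑ v, (A v) ^ 2 ≤ 1) : gramDet n A k ≤ 1 / 4 := by
  have hs := sum_split k (fun v => (A v) ^ 2)
  unfold gramDet
  have hX : (0:ℝ) ≤ ∑ r, (A (iotaIdx n k false r)) ^ 2 :=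
    Finset.sum_nonneg fun _ _ => sq_nonneg _
  have hY : (0:ℝ) ≤ ∑ r, (A (iotaIdx n k true r)) ^ 2 :=
    Finset.sum_nonneg fun _ _ => sq_nonneg _
  rw [hs] at h
  nlinarith [sq_nonneg ((∑ r, (A (iotaIdx n k false r)) ^ 2) - ∑ r, (A (iotaIdx n k true r)) ^ 2),
    sq_nonneg (∑ r, A (iotaIdx n k false r) * A (iotaIdx n k true r))]



/-- vertex of the polytope associated to a subset -/
noncomputable def Q (S : Finset (Fin n)) : Fin n → ℝ := fun k => if k ∈ S then 1/4 else 0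

/-- generating set: vertices indexed by subsets of size ≠ 1 -/
def Gset (n : ℕ) : Set (Fin n → ℝ) := {x | ∃ S : Finset (Fin n), S.card ≠ 1 ∧ x = Q S}

lemma sum_Q (S : Finset (Fin n)) : ∑ k, Q S k = S.card * (1/4) := by
  unfold Q
  rw [Finset.sum_ite_mem, Finset.univ_inter, Finset.sum_const]
  simp [mul_comm]

lemma zero_mem_Gset : (0 : Fin n → ℝ) ∈ Gset n := by
  refine ⟨∅, by simp, ?_⟩
  funext k; simp [Q]

/-- the tight case: if the polygon inequality is tight at `i₀`, then `d` is an explicit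
convex combination of pair vertices and the origin. -/
lemma tight (d : Fin n → ℝ) (hbd : ∀ i, 0 ≤ d i ∧ d i ≤ 1/4) (i₀ : Fin n)
    (ht : ∑ j, d j = 2 * d i₀) : d ∈ convexHull ℝ (Gset n) := by
  classical
  set w : Option (Fin n) → ℝ :=
    fun o => o.elim (1 - 4 * d i₀) (fun j => if j = i₀ then 0 else 4 * d j) with hw
  set z : Option (Fin n) → (Fin n → ℝ) := fun o => o.elim (0 : Fin n → ℝ)
    (fun j => if j = i₀ then (0 : Fin n → ℝ) else Q {i₀, j}) with hz
  have herase : ∑ j ∈ univ.erase i₀, d j = d i₀ := by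
    have h2 := Finset.add_sum_erase univ d (mem_univ i₀)
    linarith [ht, h2]
  have hwsum : ∑ o : Option (Fin n), w o = 1 := by
    rw [Fintype.sum_option]
    have h3 : ∑ j : Fin n, w (some j) = ∑ j ∈ univ.erase i₀, 4 * d j := by
      rw [← Finset.add_sum_erase univ (fun j => w (some j)) (mem_univ i₀)]
      have hwi : w (some i₀) = 0 := by simp [hw]
      rw [hwi, zero_add]
      apply Finset.sum_congr rfl
      intro j hj
      simp only [hw, Option.elim]
      rw [if_neg (Finset.ne_of_mem_erase hj)]
    rw [h3, ← Finset.mul_sum, herase]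
    simp only [hw, Option.elim]
    ring
  have hw0 : ∀ o ∈ (univ : Finset (Option (Fin n))), 0 ≤ w o := by
    intro o _
    match o with
    | none => simp only [hw, Option.elim]; linarith [(hbd i₀).2]
    | some j =>
      simp only [hw, Option.elim]
      split
      · exact le_rfl
      · linarith [(hbd j).1]
  have hz_mem : ∀ o ∈ (univ : Finset (Option (Fin n))), z o ∈ Gset n := by
    intro o _
    match o with
    | none => exact zero_mem_Gset
    | some j =>
      by_cases h : j = i₀
      · simp only [hz, Option.elim, if_pos h]; exact zero_mem_Gset
      · simp only [hz, Option.elim, if_neg h]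
        refine ⟨{i₀, j}, ?_, rfl⟩
        rw [Finset.card_insert_of_notMem (by simp [Ne.symm h])]
        simp
  have hmass := Finset.centerMass_mem_convexHull (univ : Finset (Option (Fin n))) hw0
    (by rw [hwsum]; norm_num) hz_mem
  have hcm : (univ : Finset (Option (Fin n))).centerMass w z = d := by
    rw [Finset.centerMass, hwsum, inv_one, one_smul]
    funext k
    rw [Finset.sum_apply]
    simp only [Pi.smul_apply, smul_eq_mul]
    rw [Fintype.sum_option]
    have hnone : w none * z none k = 0 := by simp [hw, hz]
    rw [hnone, zero_add]
    rw [← Finset.add_sum_erase univ (fun j => w (some j) * z (some j) k) (mem_univ i₀)]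
    have hi₀ : w (some i₀) * z (some i₀) k = 0 := by simp [hw]
    rw [hi₀, zero_add]
    have hcongr : ∀ j ∈ univ.erase i₀,
        w (some j) * z (some j) k = 4 * d j * Q {i₀, j} k := by
      intro j hj
      simp only [hw, hz, Option.elim, if_neg (Finset.ne_of_mem_erase hj)]
    rw [Finset.sum_congr rfl hcongr]
    by_cases hk : k = i₀
    · subst hk
      have hterm : ∀ j ∈ univ.erase k, 4 * d j * Q {k, j} k = d j := by
        intro j hj
        have : Q {k, j} k = 1/4 := by simp [Q]
        rw [this]; ring
      rw [Finset.sum_congr rfl hterm, herase]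
    · have hQ : ∀ j ∈ univ.erase i₀, 4 * d j * Q {i₀, j} k = if j = k then d j else 0 := by
        intro j hj
        unfold Q
        by_cases h : j = k
        · subst h
          rw [if_pos rfl, if_pos (by simp)]
          ring
        · rw [if_neg h, if_neg (by
            simp only [Finset.mem_insert, Finset.mem_singleton]
            push_neg
            exact ⟨hk, fun hh => h hh.symm⟩), mul_zero]
      rw [Finset.sum_congr rfl hQ, Finset.sum_ite_eq' (univ.erase i₀) k]
      rw [if_pos (Finset.mem_erase.2 ⟨hk, mem_univ k⟩)]
  rwa [hcm] at hmass

lemma decomp : ∀ (m : ℕ) (d : Fin n → ℝ),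
    (univ.filter fun j => d j ≠ 0).card ≤ m →
    (∀ i, 0 ≤ d i ∧ d i ≤ 1/4) →
    (∀ i, 2 * d i ≤ ∑ j, d j) →
    d ∈ convexHull ℝ (Gset n) := by
  intro m
  induction m with
  | zero =>
    intro d hcard _ _
    have hzero : ∀ j, d j = 0 := by
      intro j
      by_contra h
      have hmem : j ∈ univ.filter fun j => d j ≠ 0 := by simp [h]
      have := Finset.card_pos.2 ⟨j, hmem⟩
      omega
    rw [show d = 0 from funext hzero]
    exact subset_convexHull ℝ _ zero_mem_Gset
  | succ m IH =>
    intro d hcard hbd hpoly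
    by_cases hd0 : ∀ j, d j = 0
    · rw [show d = 0 from funext hd0]
      exact subset_convexHull ℝ _ zero_mem_Gset
    push_neg at hd0
    obtain ⟨j₂, hj₂⟩ := hd0
    obtain ⟨i₀, -, hmax⟩ := Finset.exists_max_image univ d ⟨j₂, mem_univ j₂⟩
    have hdi₀pos : 0 < d i₀ :=
      lt_of_lt_of_le (lt_of_le_of_ne (hbd j₂).1 (Ne.symm hj₂)) (hmax j₂ (mem_univ j₂))
    by_cases hs : ∑ j, d j = 2 * d i₀
    · exact tight d hbd i₀ hs
    have hslack : 0 < ∑ j, d j - 2 * d i₀ :=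
      lt_of_le_of_ne (by linarith [hpoly i₀]) (fun h => hs (by linarith))
    set T := univ.filter fun j => d j ≠ 0 with hT
    have hi₀T : i₀ ∈ T := by simp [hT, ne_of_gt hdi₀pos]
    obtain ⟨j₁, hj₁T, hmin⟩ := Finset.exists_min_image T d ⟨i₀, hi₀T⟩
    have hμpos : 0 < d j₁ :=
      lt_of_le_of_ne (hbd j₁).1 (Ne.symm (Finset.mem_filter.1 hj₁T).2)
    have hTuniv_sum : ∑ j ∈ T, d j = ∑ j, d j := Finset.sum_filter_ne_zero univ
    have hdT' : ∀ k, k ∉ T → d k = 0 := by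
      intro k h
      by_contra hc
      exact h (by simp [hT, hc])
    -- card T ≥ 3
    have hM3 : 3 ≤ T.card := by
      by_contra h
      push_neg at h
      have hTe : (T.erase i₀).card ≤ 1 := by
        rw [Finset.card_erase_of_mem hi₀T]; omega
      have hsumT : ∑ j ∈ T.erase i₀, d j ≤ ((T.erase i₀).card : ℝ) * d i₀ := by
        simpa [nsmul_eq_mul] using
          Finset.sum_le_card_nsmul (T.erase i₀) d (d i₀) (fun x _ => hmax x (mem_univ x))
      have hc1 : (((T.erase i₀).card : ℕ) : ℝ) ≤ 1 := by exact_mod_cast hTe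
      have hTsum := Finset.add_sum_erase T d hi₀T
      rw [hTuniv_sum] at hTsum
      nlinarith [hsumT, hc1, hdi₀pos]
    have hMR : (3:ℝ) ≤ (T.card : ℝ) := by exact_mod_cast hM3
    have hQT : ∀ k, k ∈ T → Q T k = 1/4 := fun k h => by simp [Q, h]
    have hQT' : ∀ k, k ∉ T → Q T k = 0 := fun k h => by simp [Q, h]
    by_cases hall : ∀ i ∈ T, d i = 1/4
    · have hdQ : d = Q T := by
        funext k
        by_cases h : k ∈ T
        · rw [hQT k h, hall k h]
        · rw [hQT' k h, hdT' k h]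
      rw [hdQ]
      exact subset_convexHull ℝ _ ⟨T, by omega, rfl⟩
    push_neg at hall
    obtain ⟨i₁, hi₁T, hne14⟩ := hall
    have hμlt : d j₁ < 1/4 :=
      lt_of_le_of_lt (hmin i₁ hi₁T) (lt_of_le_of_ne (hbd i₁).2 hne14)
    set t := min (4 * d j₁) (4 * (∑ j, d j - 2 * d i₀) / ((T.card : ℝ) - 2)) with htdef
    have ht0 : 0 < t := lt_min (by linarith) (div_pos (by linarith) (by linarith))
    have ht1 : t < 1 := lt_of_le_of_lt (min_le_left _ _) (by linarith)
    have h1t : 0 < 1 - t := by linarith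
    have htm : t * ((T.card : ℝ) - 2) ≤ 4 * (∑ j, d j - 2 * d i₀) := by
      calc t * ((T.card : ℝ) - 2)
          ≤ (4 * (∑ j, d j - 2 * d i₀) / ((T.card : ℝ) - 2)) * ((T.card : ℝ) - 2) :=
            mul_le_mul_of_nonneg_right (min_le_right _ _) (by linarith)
        _ = 4 * (∑ j, d j - 2 * d i₀) :=
            div_mul_cancel₀ _ (by linarith : ((T.card : ℝ) - 2) ≠ 0)
    set y : Fin n → ℝ := fun k => (1 - t)⁻¹ * (d k - t * Q T k) with hy
    have hyk : ∀ k, y k = (1 - t)⁻¹ * (d k - t * Q T k) := fun k => rfl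
    have hyzero : ∀ k, k ∉ T → y k = 0 := by
      intro k h
      rw [hyk k, hQT' k h, hdT' k h]
      ring
    have hy0 : ∀ k, 0 ≤ y k := by
      intro k
      by_cases h : k ∈ T
      · rw [hyk k, hQT k h]
        have : t ≤ 4 * d k := le_trans (min_le_left _ _) (by linarith [hmin k h])
        have h2 : 0 ≤ d k - t * (1/4) := by linarith
        positivity
      · rw [hyzero k h]
    have hy14 : ∀ k, y k ≤ 1/4 := by
      intro k
      by_cases h : k ∈ T
      · rw [hyk k, hQT k h, inv_mul_le_iff₀ h1t]
        linarith [(hbd k).2]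
      · rw [hyzero k h]; norm_num
    have hsumy : ∑ k, y k = (1 - t)⁻¹ * (∑ j, d j - t * ((T.card : ℝ) * (1/4))) := by
      rw [show ∑ k, y k = ∑ k, (1 - t)⁻¹ * (d k - t * Q T k) from
        Finset.sum_congr rfl fun k _ => hyk k]
      rw [← Finset.mul_sum, Finset.sum_sub_distrib, ← Finset.mul_sum, sum_Q]
    have hypoly : ∀ i, 2 * y i ≤ ∑ k, y k := by
      intro i
      by_cases h : i ∈ T
      · rw [hsumy, hyk i, hQT i h]
        have hkey : 2 * (d i - t * (1/4)) ≤ ∑ j, d j - t * ((T.card : ℝ) * (1/4)) := by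
          have := hmax i (mem_univ i)
          nlinarith [htm]
        calc 2 * ((1 - t)⁻¹ * (d i - t * (1/4)))
            = (1 - t)⁻¹ * (2 * (d i - t * (1/4))) := by ring
          _ ≤ (1 - t)⁻¹ * (∑ j, d j - t * ((T.card : ℝ) * (1/4))) :=
              mul_le_mul_of_nonneg_left hkey (by positivity)
      · rw [hyzero i h]
        have : 0 ≤ ∑ k, y k := Finset.sum_nonneg fun k _ => hy0 k
        linarith
    have hykey : y ∈ convexHull ℝ (Gset n) := by
      by_cases hcase : 4 * d j₁ ≤ 4 * (∑ j, d j - 2 * d i₀) / ((T.card : ℝ) - 2)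
      · -- t = 4 d j₁ : support strictly decreases
        have htval : t = 4 * d j₁ := min_eq_left hcase
        have hyj₁ : y j₁ = 0 := by
          rw [hyk j₁, hQT j₁ hj₁T, htval]
          ring
        apply IH y ?_ (fun i => ⟨hy0 i, hy14 i⟩) hypoly
        have hsub : (univ.filter fun j => y j ≠ 0) ⊆ T.erase j₁ := by
          intro k hk
          have hk' : y k ≠ 0 := (Finset.mem_filter.1 hk).2
          refine Finset.mem_erase.2 ⟨?_, ?_⟩
          · intro hkk; exact hk' (hkk ▸ hyj₁)
          · by_contra hc; exact hk' (hyzero k hc)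
        calc (univ.filter fun j => y j ≠ 0).card ≤ (T.erase j₁).card :=
              Finset.card_le_card hsub
          _ = T.card - 1 := Finset.card_erase_of_mem hj₁T
          _ ≤ m := by omega
      · -- t = 4 s / (M - 2) : y is tight at i₀
        push_neg at hcase
        have htval : t = 4 * (∑ j, d j - 2 * d i₀) / ((T.card : ℝ) - 2) :=
          min_eq_right (le_of_lt hcase)
        have htm' : t * ((T.card : ℝ) - 2) = 4 * (∑ j, d j - 2 * d i₀) := by
          rw [htval]
          exact div_mul_cancel₀ _ (by linarith : ((T.card : ℝ) - 2) ≠ 0)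
        apply tight y (fun i => ⟨hy0 i, hy14 i⟩) i₀
        rw [hsumy, hyk i₀, hQT i₀ hi₀T]
        rw [show ∑ j, d j - t * ((T.card : ℝ) * (1/4)) = 2 * (d i₀ - t * (1/4)) from by
          nlinarith [htm']]
        ring
    have hdecomp : d = t • Q T + (1 - t) • y := by
      funext k
      simp only [Pi.add_apply, Pi.smul_apply, smul_eq_mul, hyk k]
      have : (1 - t) * ((1 - t)⁻¹ * (d k - t * Q T k)) = d k - t * Q T k := by
        rw [← mul_assoc, mul_inv_cancel₀ (ne_of_gt h1t), one_mul]
      rw [this]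
      ring
    rw [hdecomp]
    exact (convex_convexHull ℝ (Gset n))
      (subset_convexHull ℝ _ ⟨T, by omega, rfl⟩) hykey (le_of_lt ht0) (by linarith) (by ring)


lemma exists_tensor (S : Finset (Fin n)) (hS : S.card ≠ 1) :
    ∃ A : (Fin n → Bool) → ℝ, (∑ v, (A v)^2 ≤ 1) ∧ (fun k => gramDet n A k) = Q S := by
  classical
  by_cases h0 : S = ∅
  · refine ⟨fun _ => 0, by simp, ?_⟩
    funext k
    simp [gramDet, Q, h0]
  · have hc0 : S.card ≠ 0 := fun hh => h0 (Finset.card_eq_zero.1 hh)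
    have hS2 : 1 < S.card := by omega
    obtain ⟨a, ha, b, hb, hab⟩ := Finset.one_lt_card.1 hS2
    set c : ℝ := Real.sqrt (1/2) with hc
    have hc2 : c^2 = 1/2 := Real.sq_sqrt (by norm_num)
    set v0 : Fin n → Bool := fun _ => false with hv0
    set vS : Fin n → Bool := fun j => decide (j ∈ S) with hvS
    have hne : v0 ≠ vS := by
      intro h
      have := congrFun h a
      simp [hv0, hvS, ha] at this
    set A : (Fin n → Bool) → ℝ := fun v => if v = v0 then c else if v = vS then c else 0 with hA
    have hsq : ∀ v, (A v)^2 = (if v = v0 then c^2 else 0) + (if v = vS then c^2 else 0) := by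
      intro v
      by_cases h1 : v = v0
      · have h2 : ¬ v = vS := fun hh => hne (h1 ▸ hh)
        simp [hA, h1, h2]
        exact fun hh => absurd hh hne
      · by_cases h2 : v = vS
        · simp [hA, h1, h2]
          exact fun hh => absurd hh.symm hne
        · simp [hA, h1, h2]
    have hnorm : ∑ v, (A v)^2 = 1 := by
      simp only [hsq]
      rw [Finset.sum_add_distrib, Finset.sum_ite_eq' univ v0 (fun _ => c^2),
        Finset.sum_ite_eq' univ vS (fun _ => c^2)]
      simp [hc2]
      norm_num
    refine ⟨A, le_of_eq hnorm, ?_⟩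
    funext k
    have key : ∀ (bb : Bool) (r : {j : Fin n // j ≠ k} → Bool),
        A (iotaIdx n k bb r) = (if bb = v0 k ∧ r = (fun j => v0 j.1) then c else
          if bb = vS k ∧ r = (fun j => vS j.1) then c else 0) := by
      intro bb r
      have h1 : (iotaIdx n k bb r = v0) ↔ (bb = v0 k ∧ r = fun j => v0 j.1) := by
        rw [show iotaIdx n k bb r = (sliceEquiv k).symm (bb, r) from rfl,
          Equiv.symm_apply_eq, Prod.ext_iff]
        exact Iff.rfl
      have h2 : (iotaIdx n k bb r = vS) ↔ (bb = vS k ∧ r = fun j => vS j.1) := by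
        rw [show iotaIdx n k bb r = (sliceEquiv k).symm (bb, r) from rfl,
          Equiv.symm_apply_eq, Prod.ext_iff]
        exact Iff.rfl
      show (if iotaIdx n k bb r = v0 then c else if iotaIdx n k bb r = vS then c else 0) =
        _
      rw [if_congr h1 rfl rfl, if_congr h2 rfl rfl]
    have hv0k : v0 k = false := rfl
    by_cases hk : k ∈ S
    · have hvSk : vS k = true := by simp [hvS, hk]
      have hfalse : ∀ r, A (iotaIdx n k false r) =
          if r = (fun j => v0 j.1) then c else 0 := by
        intro r; rw [key]; simp [hvSk, hv0k]
      have htrue : ∀ r, A (iotaIdx n k true r) =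
          if r = (fun j => vS j.1) then c else 0 := by
        intro r; rw [key]; simp [hvSk, hv0k]
      have hrne : (fun j : {j : Fin n // j ≠ k} => v0 j.1) ≠ (fun j => vS j.1) := by
        have hex : ∃ j ∈ S, j ≠ k := by
          by_cases hak : a = k
          · exact ⟨b, hb, fun hh => hab (hh ▸ hak ▸ rfl)⟩
          · exact ⟨a, ha, hak⟩
        obtain ⟨j, hjS, hjk⟩ := hex
        intro h
        have := congrFun h ⟨j, hjk⟩
        simp [hv0, hvS, hjS] at this
      have hX : ∑ r, (A (iotaIdx n k false r))^2 = c^2 := by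
        rw [show (∑ r, (A (iotaIdx n k false r))^2) =
            ∑ r, (if r = (fun j : {j : Fin n // j ≠ k} => v0 j.1) then c^2 else 0) from
          Finset.sum_congr rfl fun r _ => by rw [hfalse]; split <;> simp]
        rw [Finset.sum_ite_eq' univ _ (fun _ => c^2), if_pos (mem_univ _)]
      have hY : ∑ r, (A (iotaIdx n k true r))^2 = c^2 := by
        rw [show (∑ r, (A (iotaIdx n k true r))^2) =
            ∑ r, (if r = (fun j : {j : Fin n // j ≠ k} => vS j.1) then c^2 else 0) from
          Finset.sum_congr rfl fun r _ => by rw [htrue]; split <;> simp]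
        rw [Finset.sum_ite_eq' univ _ (fun _ => c^2), if_pos (mem_univ _)]
      have hC : ∑ r, A (iotaIdx n k false r) * A (iotaIdx n k true r) = 0 := by
        apply Finset.sum_eq_zero
        intro r _
        rw [hfalse, htrue]
        split_ifs with hh1 hh2
        · exact absurd (hh1 ▸ hh2) hrne
        · ring
        · ring
        · ring
      show gramDet n A k = Q S k
      unfold gramDet
      rw [hX, hY, hC, hc2]
      simp [Q, hk]
      norm_num
    · have hvSk : vS k = false := by simp [hvS, hk]
      have htrue0 : ∀ r, A (iotaIdx n k true r) = 0 := by
        intro r; rw [key]; simp [hvSk, hv0k]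
      have hY : ∑ r, (A (iotaIdx n k true r))^2 = 0 := by
        apply Finset.sum_eq_zero
        intro r _
        rw [htrue0]; ring
      have hC : ∑ r, A (iotaIdx n k false r) * A (iotaIdx n k true r) = 0 := by
        apply Finset.sum_eq_zero
        intro r _
        rw [htrue0]; ring
      show gramDet n A k = Q S k
      unfold gramDet
      rw [hY, hC]
      simp [Q, hk]

end GramProof

/-- The convex hull of the Gram locus is the polytope cut out by
`0 ≤ d_i ≤ 1/4` and `d_i ≤ Σ_{j ≠ i} d_j`. -/
theorem convexHull_gramLocus (n : ℕ) (hn : 2 ≤ n) :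
    convexHull ℝ
        ((fun A : (Fin n → Bool) → ℝ => fun k : Fin n => gramDet n A k) ''
          {A : (Fin n → Bool) → ℝ | ∑ v : Fin n → Bool, (A v) ^ 2 ≤ 1}) =
      {d : Fin n → ℝ |
        (∀ i : Fin n, 0 ≤ d i ∧ d i ≤ 1 / 4) ∧
        ∀ i : Fin n, d i ≤ ∑ j ∈ Finset.univ.erase i, d j} := by
  classical
  apply Set.Subset.antisymm
  · apply convexHull_min
    · rintro d ⟨A, hA, rfl⟩
      refine ⟨fun i => ⟨GramProof.gram_nonneg A i, GramProof.gram_le_quarter A i hA⟩,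
        fun i => GramProof.polygon A i⟩
    · rintro x ⟨hx1, hx2⟩ y ⟨hy1, hy2⟩ a b ha hb hab
      constructor
      · intro i
        simp only [Pi.add_apply, Pi.smul_apply, smul_eq_mul]
        constructor
        · exact add_nonneg (mul_nonneg ha (hx1 i).1) (mul_nonneg hb (hy1 i).1)
        · have h1 := mul_le_mul_of_nonneg_left (hx1 i).2 ha
          have h2 := mul_le_mul_of_nonneg_left (hy1 i).2 hb
          nlinarith
      · intro i
        simp only [Pi.add_apply, Pi.smul_apply, smul_eq_mul]
        rw [Finset.sum_add_distrib, ← Finset.mul_sum, ← Finset.mul_sum]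
        have h1 := mul_le_mul_of_nonneg_left (hx2 i) ha
        have h2 := mul_le_mul_of_nonneg_left (hy2 i) hb
        linarith
  · rintro d ⟨hbd, hpoly⟩
    have hpoly' : ∀ i, 2 * d i ≤ ∑ j, d j := by
      intro i
      have h := hpoly i
      have h2 := Finset.add_sum_erase Finset.univ d (Finset.mem_univ i)
      linarith
    have hmem := GramProof.decomp (n := n)
      ((Finset.univ.filter fun j => d j ≠ 0).card) d le_rfl hbd hpoly'
    have hsub : GramProof.Gset n ⊆
        (fun A : (Fin n → Bool) → ℝ => fun k : Fin n => gramDet n A k) ''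
          {A : (Fin n → Bool) → ℝ | ∑ v : Fin n → Bool, (A v) ^ 2 ≤ 1} := by
      rintro x ⟨S, hScard, rfl⟩
      obtain ⟨A, hAn, hAQ⟩ := GramProof.exists_tensor S hScard
      exact ⟨A, hAn, hAQ⟩
    exact convexHull_mono hsub hmem
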